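/- Let N be an odd positive integer and r coprime to N. Any two elements g, h ∈ GL₂(ℤ/Nℤ) with det(g) = det(h) = r satisfying g² = −r·I and h² = −r·I are conjugate in GL₂(ℤ/Nℤ). -/

import Mathlib

open Matrix

/-- key quadratic form: determinant of [v | Mv] for v = (a,b). -/
private def Qf {R : Type*} [CommRing R] (M : Matrix (Fin 2) (Fin 2) R) (a b : R) : R :=
  a^2 * M 1 0 + a*b*(M 1 1 - M 0 0) - b^2 * M 0 1

private lemma fieldstep {p : ℕ} (hp : p.Prime) (hp2 : p ≠ 2)
    (M : Matrix (Fin 2) (Fin 2) (ZMod p)) (hdet : M.det ≠ 0) (htr : M.trace = 0) :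
    ∃ a b : ZMod p, Qf M a b ≠ 0 := by
  haveI : Fact p.Prime := ⟨hp⟩
  by_contra hcon
  push_neg at hcon
  have h10 := hcon 1 0
  have h01 := hcon 0 1
  have h11 := hcon 1 1
  simp only [Qf] at h10 h01 h11
  ring_nf at h10 h01 h11
  rw [Matrix.trace_fin_two] at htr
  have two_ne : (2 : ZMod p) ≠ 0 := by
    intro h2
    have : p ∣ 2 := by
      rwa [show ((2:ZMod p) = ((2:ℕ):ZMod p)) by norm_num, ZMod.natCast_eq_zero_iff] at h2
    exact hp2 ((Nat.prime_dvd_prime_iff_eq hp Nat.prime_two).mp this)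
  rw [Matrix.det_fin_two] at hdet
  apply hdet
  have hM10 : M 1 0 = 0 := by linear_combination h10
  have hM01 : M 0 1 = 0 := by linear_combination -h01
  have hM00 : M 0 0 = 0 := by
    have h2 : 2 * M 0 0 = 0 := by linear_combination htr - h11 + h10 + h01
    rcases mul_eq_zero.mp h2 with h2 | h2
    · exact absurd h2 two_ne
    · exact h2
  have hM11 : M 1 1 = 0 := by linear_combination htr - hM00
  rw [hM00, hM11, hM10, hM01]; ring

private lemma unit_of_primes {N : ℕ} [NeZero N] (x : ZMod N)
    (h : ∀ p : ℕ, p.Prime → (hp : p ∣ N) → (ZMod.castHom hp (ZMod p)) x ≠ 0) : IsUnit x := by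
  have hx : x = ((x.val : ℕ) : ZMod N) := (ZMod.natCast_rightInverse x).symm
  rw [hx, ZMod.isUnit_iff_coprime]
  by_contra hcop
  obtain ⟨p, hp, hpv, hpN⟩ := Nat.Prime.not_coprime_iff_dvd.mp hcop
  apply h p hp hpN
  rw [hx, map_natCast]
  exact (ZMod.natCast_eq_zero_iff _ _).mpr hpv

private lemma crt_lift {N : ℕ} (hN : 0 < N) (c : ℕ → ℕ) :
    ∃ x : ZMod N, ∀ p : ℕ, p.Prime → (hp : p ∣ N) →
      (ZMod.castHom hp (ZMod p)) x = ((c p : ℕ) : ZMod p) := by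
  have hs : ∀ i ∈ N.primeFactors, (id i : ℕ) ≠ 0 := fun i hi =>
    (Nat.prime_of_mem_primeFactors hi).ne_zero
  have pp : Set.Pairwise (N.primeFactors : Set ℕ) (Function.onFun Nat.Coprime id) := by
    intro i hi j hj hij
    exact (Nat.coprime_primes (Nat.prime_of_mem_primeFactors hi)
      (Nat.prime_of_mem_primeFactors hj)).mpr hij
  obtain ⟨k, hk⟩ := Nat.chineseRemainderOfFinset c id N.primeFactors hs pp
  refine ⟨(k : ZMod N), fun p hp hpN => ?_⟩
  have hmem : p ∈ N.primeFactors := Nat.mem_primeFactors.mpr ⟨hp, hpN, hN.ne'⟩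
  rw [map_natCast]
  exact (ZMod.natCast_eq_natCast_iff _ _ _).mpr (hk p hmem)

private lemma exists_unit_Qf {N : ℕ} [NeZero N] (hNodd : Odd N)
    (M : Matrix (Fin 2) (Fin 2) (ZMod N)) (hdet : IsUnit M.det) (htr : M.trace = 0) :
    ∃ a b : ZMod N, IsUnit (Qf M a b) := by
  have hN : 0 < N := Nat.pos_of_ne_zero (NeZero.ne N)
  have key : ∀ p : ℕ, ∀ _ : p.Prime, ∀ hp : p ∣ N,
      ∃ ab : ZMod p × ZMod p,
        Qf (M.map (ZMod.castHom hp (ZMod p))) ab.1 ab.2 ≠ 0 := by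
    intro p hpp hpN
    have hp2 : p ≠ 2 := by
      rintro rfl
      exact (Nat.not_even_iff_odd.mpr hNodd) ((even_iff_two_dvd).mpr hpN)
    have hdet' : (M.map (ZMod.castHom hpN (ZMod p))).det ≠ 0 := by
      rw [← RingHom.mapMatrix_apply, ← RingHom.map_det]
      haveI : Fact p.Prime := ⟨hpp⟩
      exact (hdet.map (ZMod.castHom hpN (ZMod p))).ne_zero
    have htr' : (M.map (ZMod.castHom hpN (ZMod p))).trace = 0 := by
      have : (M.map (ZMod.castHom hpN (ZMod p))).trace
          = (ZMod.castHom hpN (ZMod p)) M.trace := by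
        simp [Matrix.trace_fin_two, Matrix.map_apply, map_add]
      rw [this, htr, map_zero]
    obtain ⟨a, b, hab⟩ := fieldstep hpp hp2 _ hdet' htr'
    exact ⟨(a, b), hab⟩
  classical
  let ca : ℕ → ℕ := fun p => if h : p.Prime ∧ p ∣ N then ((key p h.1 h.2).choose.1).val else 0
  let cb : ℕ → ℕ := fun p => if h : p.Prime ∧ p ∣ N then ((key p h.1 h.2).choose.2).val else 0
  obtain ⟨a, ha⟩ := crt_lift hN ca
  obtain ⟨b, hb⟩ := crt_lift hN cb
  refine ⟨a, b, unit_of_primes _ (fun p hpp hpN => ?_)⟩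
  haveI : Fact p.Prime := ⟨hpp⟩
  haveI : NeZero p := ⟨hpp.ne_zero⟩
  set f := ZMod.castHom hpN (ZMod p)
  have hmap : f (Qf M a b) = Qf (M.map f) (f a) (f b) := by
    simp [Qf, Matrix.map_apply, map_sub, map_add, _root_.map_mul, map_pow]
  have hfa : f a = (key p hpp hpN).choose.1 := by
    rw [ha p hpp hpN]
    simp only [ca, dif_pos (⟨hpp, hpN⟩ : p.Prime ∧ p ∣ N)]
    exact ZMod.natCast_rightInverse _
  have hfb : f b = (key p hpp hpN).choose.2 := by
    rw [hb p hpp hpN]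
    simp only [cb, dif_pos (⟨hpp, hpN⟩ : p.Prime ∧ p ∣ N)]
    exact ZMod.natCast_rightInverse _
  rw [hmap, hfa, hfb]
  exact (key p hpp hpN).choose_spec

private lemma trace_eq_zero' {N : ℕ} (M Mi : Matrix (Fin 2) (Fin 2) (ZMod N))
    (hMMi : M * Mi = 1) (rz : ZMod N) (hg : M.det = rz)
    (hg2 : M * M = -(rz • 1)) : M.trace = 0 := by
  have e : ∀ i j : Fin 2, M i 0 * M 0 j + M i 1 * M 1 j
      = (-(rz • (1 : Matrix (Fin 2) (Fin 2) (ZMod N)))) i j := by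
    intro i j
    have h := congrFun (congrFun hg2 i) j
    simpa [Matrix.mul_apply, Fin.sum_univ_two] using h
  have e00 := e 0 0; have e01 := e 0 1; have e10 := e 1 0; have e11 := e 1 1
  simp [Matrix.smul_apply, Matrix.one_apply] at e00 e01 e10 e11
  rw [Matrix.det_fin_two] at hg
  have hsmul : (M 0 0 + M 1 1) • M = 0 := by
    ext i j
    fin_cases i <;> fin_cases j
    · show (M 0 0 + M 1 1) * M 0 0 = 0; linear_combination e00 + hg
    · show (M 0 0 + M 1 1) * M 0 1 = 0; linear_combination e01
    · show (M 0 0 + M 1 1) * M 1 0 = 0; linear_combination e10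
    · show (M 0 0 + M 1 1) * M 1 1 = 0; linear_combination e11 + hg
  have h1 : (M 0 0 + M 1 1) • (1 : Matrix (Fin 2) (Fin 2) (ZMod N)) = 0 := by
    rw [← hMMi, ← smul_mul_assoc, hsmul, zero_mul]
  have h3 := congrFun (congrFun h1 0) 0
  simp only [Matrix.smul_apply, Matrix.one_apply_eq, smul_eq_mul, mul_one,
    Matrix.zero_apply] at h3
  rw [Matrix.trace_fin_two]
  exact h3

private lemma semiconj_companion {N : ℕ} [NeZero N] (hNodd : Odd N) (rz : ZMod N)
    (hru : IsUnit rz) (M Mi : Matrix (Fin 2) (Fin 2) (ZMod N)) (hMMi : M * Mi = 1)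
    (hg : M.det = rz) (hg2 : M * M = -(rz • 1)) :
    ∃ P : Matrix (Fin 2) (Fin 2) (ZMod N), IsUnit P ∧ P * !![0, -rz; 1, 0] = M * P := by
  have htr := trace_eq_zero' M Mi hMMi rz hg hg2
  have hdet : IsUnit M.det := hg ▸ hru
  obtain ⟨a, b, hQ⟩ := exists_unit_Qf hNodd M hdet htr
  have e : ∀ i j : Fin 2, M i 0 * M 0 j + M i 1 * M 1 j
      = (-(rz • (1 : Matrix (Fin 2) (Fin 2) (ZMod N)))) i j := by
    intro i j
    have h := congrFun (congrFun hg2 i) j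
    simpa [Matrix.mul_apply, Fin.sum_univ_two] using h
  have e00 := e 0 0; have e01 := e 0 1; have e10 := e 1 0; have e11 := e 1 1
  simp [Matrix.smul_apply, Matrix.one_apply] at e00 e01 e10 e11
  refine ⟨!![a, M 0 0 * a + M 0 1 * b; b, M 1 0 * a + M 1 1 * b], ?_, ?_⟩
  · rw [Matrix.isUnit_iff_isUnit_det]
    have : (!![a, M 0 0 * a + M 0 1 * b; b, M 1 0 * a + M 1 1 * b]).det = Qf M a b := by
      rw [Matrix.det_fin_two_of, Qf]; ring
    rw [this]; exact hQ
  · ext i j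
    fin_cases i <;> fin_cases j <;>
      simp [Matrix.mul_apply, Fin.sum_univ_two]
    · linear_combination (-a) * e00 + (-b) * e01
    · linear_combination (-b) * e11 + (-a) * e10

/-- Let `N` be an odd positive integer and `r` coprime to `N`.  Any two elements
`g, h ∈ GL₂(ℤ/Nℤ)` with `det g = det h = r` satisfying `g² = −r·I` and
`h² = −r·I` are conjugate in `GL₂(ℤ/Nℤ)`. -/
theorem stmt_2 (N : ℕ) (hN : 0 < N) (hNodd : Odd N) (r : ℤ) (hr : Int.gcd r N = 1)
    (g h : GL (Fin 2) (ZMod N))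
    (hg : ((g : Matrix (Fin 2) (Fin 2) (ZMod N))).det = (r : ZMod N))
    (hh : ((h : Matrix (Fin 2) (Fin 2) (ZMod N))).det = (r : ZMod N))
    (hg2 : (g : Matrix (Fin 2) (Fin 2) (ZMod N)) * (g : Matrix (Fin 2) (Fin 2) (ZMod N))
      = -((r : ZMod N) • (1 : Matrix (Fin 2) (Fin 2) (ZMod N))))
    (hh2 : (h : Matrix (Fin 2) (Fin 2) (ZMod N)) * (h : Matrix (Fin 2) (Fin 2) (ZMod N))
      = -((r : ZMod N) • (1 : Matrix (Fin 2) (Fin 2) (ZMod N)))) :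
    IsConj g h := by
  haveI : NeZero N := ⟨hN.ne'⟩
  have hru : IsUnit ((r : ZMod N)) := by
    have h1 : IsCoprime (r : ℤ) (N : ℤ) := Int.isCoprime_iff_gcd_eq_one.mpr hr
    have h2 := h1.map (Int.castRingHom (ZMod N))
    simp only [eq_intCast, Int.cast_natCast, ZMod.natCast_self] at h2
    exact (isCoprime_zero_right).mp h2
  obtain ⟨Pg, hPgu, hPg⟩ := semiconj_companion hNodd ((r : ZMod N)) hru
    (↑g) (↑g⁻¹) (Units.mul_inv g) hg hg2
  obtain ⟨Ph, hPhu, hPh⟩ := semiconj_companion hNodd ((r : ZMod N)) hru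
    (↑h) (↑h⁻¹) (Units.mul_inv h) hh hh2
  have hCu : IsUnit (!![0, -((r : ZMod N)); 1, 0]) := by
    rw [Matrix.isUnit_iff_isUnit_det, Matrix.det_fin_two_of]
    simpa using hru
  have c1 : IsConj hCu.unit g := by
    refine ⟨toUnits hPgu.unit, ?_⟩
    show hPgu.unit * hCu.unit = g * hPgu.unit
    apply Units.ext
    rw [Units.val_mul, Units.val_mul, hPgu.unit_spec, hCu.unit_spec]
    exact hPg
  have c2 : IsConj hCu.unit h := by
    refine ⟨toUnits hPhu.unit, ?_⟩
    show hPhu.unit * hCu.unit = h * hPhu.unit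
    apply Units.ext
    rw [Units.val_mul, Units.val_mul, hPhu.unit_spec, hCu.unit_spec]
    exact hPh
  exact c1.symm.trans c2
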